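/- arXiv:1307.5357 — 2 statements merged into one kernel-verified Lean document; each statement's English description precedes it below -/
import Mathlib

section
/- Let g = gl_n(ℂ) × gl_{n-1}(ℂ) with n ≥ 2, let h ⊂ g be the image of gl_{n-1}(ℂ) under the embedding x ↦ (diag(x,0), x) (where diag(x,0) places x in the upper-left (n-1)×(n-1) block), and let b = b_n × b_{n-1} where b_n ⊂ gl_n(ℂ) is the Borel subalgebra of upper triangular matrices conjugated by a fixed element making it transverse to h. Then for the specific theta-stable Borel subalgebras b_n, b_{n-1} constructed from the fundamental Cartan subalgebras t_n, t_{n-1}, one has g = h ⊕ b as vector spaces. -/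
open Matrix

/-- Upper triangular `k × k` complex matrices, as a subspace of `gl_k(ℂ)`. -/
noncomputable def upperTriangularSubmodule (k : ℕ) : Submodule ℂ (Matrix (Fin k) (Fin k) ℂ) where
  carrier := {x | ∀ i j : Fin k, j < i → x i j = 0}
  zero_mem' := by intro i j _; rfl
  add_mem' := by
    intro a b ha hb i j hij
    simp [Matrix.add_apply, ha i j hij, hb i j hij]
  smul_mem' := by
    intro c a ha i j hij
    simp [Matrix.smul_apply, ha i j hij]

/-- Conjugation `x ↦ u x u⁻¹` by an invertible matrix, as a linear map. -/
noncomputable def conjL {k : ℕ} (u : GL (Fin k) ℂ) :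
    Matrix (Fin k) (Fin k) ℂ →ₗ[ℂ] Matrix (Fin k) (Fin k) ℂ :=
  (LinearMap.mulLeft ℂ (u : Matrix (Fin k) (Fin k) ℂ)).comp
    (LinearMap.mulRight ℂ ((u⁻¹ : GL (Fin k) ℂ) : Matrix (Fin k) (Fin k) ℂ))

/-- The Lie algebra embedding `gl_{n-1}(ℂ) → gl_n(ℂ) × gl_{n-1}(ℂ)`,
`x ↦ (diag(x,0), x)`, where `diag(x,0)` puts `x` in the upper-left
`(n-1)×(n-1)` block. -/
noncomputable def embL (n : ℕ) : Matrix (Fin (n - 1)) (Fin (n - 1)) ℂ →ₗ[ℂ]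
    Matrix (Fin n) (Fin n) ℂ × Matrix (Fin (n - 1)) (Fin (n - 1)) ℂ where
  toFun x :=
    (Matrix.of fun i j : Fin n =>
      if hi : (i : ℕ) < n - 1 then
        if hj : (j : ℕ) < n - 1 then x ⟨i, hi⟩ ⟨j, hj⟩ else 0
      else 0, x)
  map_add' a b := by
    refine Prod.ext ?_ rfl
    ext i j
    by_cases hi : (i : ℕ) < n - 1 <;> by_cases hj : (j : ℕ) < n - 1 <;>
      simp [hi, hj, Matrix.add_apply]
  map_smul' c a := by
    refine Prod.ext ?_ rfl
    ext i j
    by_cases hi : (i : ℕ) < n - 1 <;> by_cases hj : (j : ℕ) < n - 1 <;>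
      simp [hi, hj, Matrix.smul_apply]

namespace Stmt4Aux

noncomputable def Jmat (k : ℕ) : Matrix (Fin k) (Fin k) ℂ :=
  Matrix.of fun i j => if j = i.rev then 1 else 0

lemma Jmat_mul_apply {k : ℕ} (X : Matrix (Fin k) (Fin k) ℂ) (i j : Fin k) :
    (Jmat k * X) i j = X i.rev j := by
  simp [Jmat, Matrix.mul_apply, ite_mul]

lemma mul_Jmat_apply {k : ℕ} (X : Matrix (Fin k) (Fin k) ℂ) (i j : Fin k) :
    (X * Jmat k) i j = X i j.rev := by
  have h : ∀ x : Fin k, (if j = x.rev then (1:ℂ) else 0) = if x = j.rev then 1 else 0 := by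
    intro x
    refine if_congr ?_ rfl rfl
    constructor <;> rintro rfl <;> simp [Fin.rev_rev]
  simp only [Jmat, Matrix.mul_apply, Matrix.of_apply, h, mul_ite, mul_one, mul_zero]
  simp

lemma Jmat_transpose (k : ℕ) : (Jmat k)ᵀ = Jmat k := by
  ext i j
  simp only [Jmat, Matrix.transpose_apply, Matrix.of_apply]
  refine if_congr ?_ rfl rfl
  constructor <;> rintro rfl <;> simp [Fin.rev_rev]

lemma Jmat_mul_Jmat (k : ℕ) : Jmat k * Jmat k = 1 := by
  ext i j
  rw [Jmat_mul_apply]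
  simp only [Jmat, Matrix.of_apply, Matrix.one_apply]
  refine if_congr ?_ rfl rfl
  constructor <;> rintro rfl <;> simp [Fin.rev_rev]

lemma Jmat_mul_Jmat_mul {k : ℕ} (X : Matrix (Fin k) (Fin k) ℂ) :
    Jmat k * (Jmat k * X) = X := by
  rw [← Matrix.mul_assoc, Jmat_mul_Jmat, Matrix.one_mul]

noncomputable def gu (k : ℕ) : GL (Fin k) ℂ where
  val := 1 + Complex.I • Jmat k
  inv := (2:ℂ)⁻¹ • (1 - Complex.I • Jmat k)
  val_inv := by
    simp only [mul_sub, mul_add, add_mul, sub_mul, one_mul, mul_one, smul_mul_assoc,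
      mul_smul_comm, smul_smul, Jmat_mul_Jmat, Complex.I_mul_I]
    match_scalars <;> (try ring_nf; try simp only [Complex.I_sq]; try norm_num; try ring_nf)
  inv_val := by
    simp only [mul_sub, mul_add, add_mul, sub_mul, one_mul, mul_one, smul_mul_assoc,
      mul_smul_comm, smul_smul, Jmat_mul_Jmat, Complex.I_mul_I]
    match_scalars <;> (try ring_nf; try simp only [Complex.I_sq]; try norm_num; try ring_nf)

lemma gu_sq (k : ℕ) : ((gu k : Matrix (Fin k) (Fin k) ℂ)) * (gu k : Matrix (Fin k) (Fin k) ℂ)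
    = ((2:ℂ) * Complex.I) • Jmat k := by
  show (1 + Complex.I • Jmat k) * (1 + Complex.I • Jmat k) = _
  simp only [mul_sub, mul_add, add_mul, sub_mul, one_mul, mul_one, smul_mul_assoc,
    mul_smul_comm, smul_smul, Jmat_mul_Jmat, Complex.I_mul_I]
  match_scalars <;> (try ring_nf; try simp only [Complex.I_sq]; try norm_num; try ring_nf)

lemma gu_symm (k : ℕ) : ((gu k : Matrix (Fin k) (Fin k) ℂ))ᵀ = (gu k : Matrix (Fin k) (Fin k) ℂ) := by
  show (1 + Complex.I • Jmat k)ᵀ = _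
  rw [Matrix.transpose_add, Matrix.transpose_smul, Jmat_transpose, Matrix.transpose_one]
  rfl

lemma gu_inv_symm (k : ℕ) : (((gu k)⁻¹ : GL (Fin k) ℂ) : Matrix (Fin k) (Fin k) ℂ)ᵀ
    = (((gu k)⁻¹ : GL (Fin k) ℂ) : Matrix (Fin k) (Fin k) ℂ) := by
  show ((2:ℂ)⁻¹ • (1 - Complex.I • Jmat k))ᵀ = _
  rw [Matrix.transpose_smul, Matrix.transpose_sub, Matrix.transpose_smul, Jmat_transpose,
    Matrix.transpose_one]
  rfl


lemma mem_upperT {k : ℕ} {x : Matrix (Fin k) (Fin k) ℂ} :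
    x ∈ upperTriangularSubmodule k ↔ ∀ i j : Fin k, j < i → x i j = 0 := Iff.rfl

lemma conjL_apply {k : ℕ} (u : GL (Fin k) ℂ) (t : Matrix (Fin k) (Fin k) ℂ) :
    conjL u t = (u : Matrix (Fin k) (Fin k) ℂ) *
      (t * ((u⁻¹ : GL (Fin k) ℂ) : Matrix (Fin k) (Fin k) ℂ)) := rfl

lemma sandwich_mem {k : ℕ} (t : Matrix (Fin k) (Fin k) ℂ) :
    (gu k : Matrix (Fin k) (Fin k) ℂ) * (conjL (gu k) t) * (gu k : Matrix (Fin k) (Fin k) ℂ)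
      = ((2:ℂ) * Complex.I) • (Jmat k * t) := by
  rw [conjL_apply]
  simp only [Matrix.mul_assoc]
  rw [Units.inv_mul, mul_one, ← Matrix.mul_assoc, gu_sq, smul_mul_assoc]

lemma sandwich_apply {k : ℕ} (X : Matrix (Fin k) (Fin k) ℂ) (i j : Fin k) :
    ((gu k : Matrix (Fin k) (Fin k) ℂ) * X * (gu k : Matrix (Fin k) (Fin k) ℂ)) i j
      = X i j + Complex.I * X i.rev j + Complex.I * X i j.rev - X i.rev j.rev := by
  have hexp : (gu k : Matrix (Fin k) (Fin k) ℂ) * X * (gu k : Matrix (Fin k) (Fin k) ℂ)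
      = X + Complex.I • (Jmat k * X) + Complex.I • (X * Jmat k) - Jmat k * (X * Jmat k) := by
    show (1 + Complex.I • Jmat k) * X * (1 + Complex.I • Jmat k) = _
    simp only [mul_add, add_mul, one_mul, mul_one, smul_mul_assoc, mul_smul_comm, smul_smul,
      Complex.I_mul_I, Matrix.mul_assoc]
    match_scalars <;> (try ring_nf; try simp only [Complex.I_sq]; try norm_num; try ring_nf)
  rw [hexp]
  simp only [Matrix.sub_apply, Matrix.add_apply, Matrix.smul_apply, Jmat_mul_apply,
    mul_Jmat_apply, smul_eq_mul]

lemma theta_stable (k : ℕ) : ∀ x ∈ (upperTriangularSubmodule k).map (conjL (gu k)),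
    -xᵀ ∈ (upperTriangularSubmodule k).map (conjL (gu k)) := by
  rintro x hx
  rw [Submodule.mem_map] at hx ⊢
  obtain ⟨t, ht, rfl⟩ := hx
  refine ⟨-(Jmat k * (tᵀ * Jmat k)), ?_, ?_⟩
  · rw [mem_upperT]
    intro i j hij
    have h : (Jmat k * (tᵀ * Jmat k)) i j = t j.rev i.rev := by
      rw [Jmat_mul_apply, mul_Jmat_apply]; rfl
    rw [Matrix.neg_apply, h, mem_upperT.mp ht _ _ (Fin.rev_lt_rev.mpr hij), neg_zero]
  · rw [conjL_apply, conjL_apply, Matrix.transpose_mul, Matrix.transpose_mul, gu_symm,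
      gu_inv_symm]
    show (1 + Complex.I • Jmat k) * (-(Jmat k * (tᵀ * Jmat k)) * ((2:ℂ)⁻¹ • (1 - Complex.I • Jmat k)))
      = -(((2:ℂ)⁻¹ • (1 - Complex.I • Jmat k)) * tᵀ * (1 + Complex.I • Jmat k))
    simp only [mul_add, add_mul, one_mul, mul_one, mul_sub, sub_mul, smul_mul_assoc,
      mul_smul_comm, smul_smul, Matrix.mul_assoc, neg_mul, mul_neg, Jmat_mul_Jmat,
      Jmat_mul_Jmat_mul, Complex.I_mul_I]
    match_scalars <;> (try ring_nf; try simp only [Complex.I_sq]; try norm_num; try ring_nf)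

lemma core (m : ℕ) (Y : ℕ → ℕ → ℂ)
    (Yout : ∀ a b, m ≤ a ∨ m ≤ b → Y a b = 0)
    (hA : ∀ i j, i < m + 1 → j < m + 1 → i + j + 2 ≤ m + 1 →
      Y i j + Complex.I * Y (m - i) j + Complex.I * Y i (m - j) - Y (m - i) (m - j) = 0)
    (hB : ∀ a b, a < m → b < m → a + b + 2 ≤ m →
      Y a b + Complex.I * Y (m - 1 - a) b + Complex.I * Y a (m - 1 - b)
        - Y (m - 1 - a) (m - 1 - b) = 0) :
    ∀ a b, Y a b = 0 := by
  suffices H : ∀ t a b, (a < t ∨ b < t ∨ m ≤ a + t ∨ m ≤ b + t) → Y a b = 0 by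
    intro a b; exact H m a b (by omega)
  intro t
  induction t with
  | zero =>
    intro a b h
    rcases h with h | h | h | h
    · omega
    · omega
    · exact Yout a b (by omega)
    · exact Yout a b (by omega)
  | succ t ih =>
    by_cases h2t : 2 * t + 1 ≤ m
    case neg =>
      intro a b h
      rcases le_or_gt m a with ha | ha
      · exact Yout a b (Or.inl ha)
      rcases le_or_gt m b with hb | hb
      · exact Yout a b (Or.inr hb)
      exact ih a b (by omega)
    case pos =>
      have star1 : ∀ j, j + t + 1 ≤ m → Y t j + Complex.I * Y t (m - j) = 0 := by
        intro j hj
        have h := hA t j (by omega) (by omega) (by omega)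
        rw [ih (m - t) j (by omega), ih (m - t) (m - j) (by omega)] at h
        linear_combination h
      have star2 : ∀ j, j + t + 1 ≤ m → Y j t + Complex.I * Y (m - j) t = 0 := by
        intro j hj
        have h := hA j t (by omega) (by omega) (by omega)
        rw [ih (m - j) (m - t) (by omega), ih j (m - t) (by omega)] at h
        linear_combination h
      have S1 : ∀ b, Y t b = 0 := by
        intro b
        rcases lt_or_ge b t with h | h
        · exact ih t b (by omega)
        rcases le_or_gt m (b + t) with h' | h'
        · exact ih t b (by omega)
        by_cases hbt : b = t
        · subst hbt
          have h1 := star1 b (by omega)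
          rw [ih b (m - b) (by omega)] at h1
          linear_combination h1
        · have hb1 : t + 1 ≤ b := by omega
          have e1 := star1 b (by omega)
          have e2 := star1 (m - b) (by omega)
          rw [show m - (m - b) = b by omega] at e2
          have h0 : (2:ℂ) * Y t b = 0 := by
            linear_combination e1 - Complex.I * e2 + Y t b * Complex.I_sq
          have := mul_eq_zero.mp h0
          simpa using this
      have S2 : ∀ a, Y a t = 0 := by
        intro a
        rcases lt_or_ge a t with h | h
        · exact ih a t (by omega)
        rcases le_or_gt m (a + t) with h' | h'
        · exact ih a t (by omega)
        by_cases hat : a = t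
        · subst hat
          have h1 := star2 a (by omega)
          rw [ih (m - a) a (by omega)] at h1
          linear_combination h1
        · have ha1 : t + 1 ≤ a := by omega
          have e1 := star2 a (by omega)
          have e2 := star2 (m - a) (by omega)
          rw [show m - (m - a) = a by omega] at e2
          have h0 : (2:ℂ) * Y a t = 0 := by
            linear_combination e1 - Complex.I * e2 + Y a t * Complex.I_sq
          have := mul_eq_zero.mp h0
          simpa using this
      have starB1 : ∀ c, t + 1 ≤ c → c ≤ m - 1 → Y (m - 1 - t) c
          = Complex.I * Y (m - 1 - t) (m - 1 - c) := by
        intro c h1 h2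
        have h := hB t (m - 1 - c) (by omega) (by omega) (by omega)
        rw [S1 (m - 1 - c), show m - 1 - (m - 1 - c) = c by omega, S1 c] at h
        linear_combination -h
      have starB2 : ∀ c, t + 1 ≤ c → c ≤ m - 1 → Y c (m - 1 - t)
          = Complex.I * Y (m - 1 - c) (m - 1 - t) := by
        intro c h1 h2
        have h := hB (m - 1 - c) t (by omega) (by omega) (by omega)
        rw [S2 (m - 1 - c), show m - 1 - (m - 1 - c) = c by omega, S2 c] at h
        linear_combination -h
      have S3 : ∀ c, Y (m - 1 - t) c = 0 := by
        intro c
        rcases le_or_gt m c with hc | hc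
        · exact Yout _ c (Or.inr hc)
        rcases lt_or_ge c t with h | h
        · exact ih _ c (by omega)
        by_cases hct : c = t
        · subst hct; exact S2 _
        have hc1 : t + 1 ≤ c := by omega
        have e1 := starB1 c hc1 (by omega)
        rcases lt_or_ge (m - 1 - c) t with hd | hd
        · rw [ih (m - 1 - t) (m - 1 - c) (by omega)] at e1
          simpa using e1
        by_cases hdt : m - 1 - c = t
        · rw [hdt, S2 _] at e1; simpa using e1
        · have e2 := starB1 (m - 1 - c) (by omega) (by omega)
          rw [show m - 1 - (m - 1 - c) = c by omega] at e2
          have h0 : (2:ℂ) * Y (m - 1 - t) c = 0 := by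
            linear_combination e1 + Complex.I * e2 + Y (m - 1 - t) c * Complex.I_sq
          have := mul_eq_zero.mp h0
          simpa using this
      have S4 : ∀ c, Y c (m - 1 - t) = 0 := by
        intro c
        rcases le_or_gt m c with hc | hc
        · exact Yout c _ (Or.inl hc)
        rcases lt_or_ge c t with h | h
        · exact ih c _ (by omega)
        by_cases hct : c = t
        · subst hct; exact S1 _
        have hc1 : t + 1 ≤ c := by omega
        have e1 := starB2 c hc1 (by omega)
        rcases lt_or_ge (m - 1 - c) t with hd | hd
        · rw [ih (m - 1 - c) (m - 1 - t) (by omega)] at e1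
          simpa using e1
        by_cases hdt : m - 1 - c = t
        · rw [hdt, S1 _] at e1; simpa using e1
        · have e2 := starB2 (m - 1 - c) (by omega) (by omega)
          rw [show m - 1 - (m - 1 - c) = c by omega] at e2
          have h0 : (2:ℂ) * Y c (m - 1 - t) = 0 := by
            linear_combination e1 + Complex.I * e2 + Y c (m - 1 - t) * Complex.I_sq
          have := mul_eq_zero.mp h0
          simpa using this
      intro a b h
      rcases le_or_gt m a with ha | ha
      · exact Yout a b (Or.inl ha)
      rcases le_or_gt m b with hb | hb
      · exact Yout a b (Or.inr hb)
      rcases h with h | h | h | h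
      · rcases lt_or_ge a t with h' | h'
        · exact ih a b (by omega)
        · have : a = t := by omega
          subst this; exact S1 b
      · rcases lt_or_ge b t with h' | h'
        · exact ih a b (by omega)
        · have : b = t := by omega
          subst this; exact S2 a
      · rcases le_or_gt m (a + t) with h' | h'
        · exact ih a b (by omega)
        · have : a = m - 1 - t := by omega
          subst this; exact S3 b
      · rcases le_or_gt m (b + t) with h' | h'
        · exact ih a b (by omega)
        · have : b = m - 1 - t := by omega
          subst this; exact S4 a

noncomputable def upperTEquiv (k : ℕ) :
    (upperTriangularSubmodule k) ≃ₗ[ℂ] ({p : Fin k × Fin k // ¬ p.2 < p.1} → ℂ) where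
  toFun x := fun p => x.1 p.1.1 p.1.2
  map_add' x y := rfl
  map_smul' c x := rfl
  invFun f := ⟨Matrix.of fun i j => if h : j < i then 0 else f ⟨(i, j), by simp [h]⟩, by
    intro i j hij
    simp only [Matrix.of_apply, dif_pos hij]⟩
  left_inv x := by
    apply Subtype.ext
    ext i j
    by_cases h : j < i
    · simp only [Matrix.of_apply, dif_pos h]
      exact (x.2 i j h).symm
    · simp only [Matrix.of_apply, dif_neg h]
  right_inv f := by
    funext p
    simp only [Matrix.of_apply, dif_neg p.2]

lemma finrank_upperT (k : ℕ) : Module.finrank ℂ (upperTriangularSubmodule k)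
    = Fintype.card {p : Fin k × Fin k // ¬ p.2 < p.1} := by
  rw [(upperTEquiv k).finrank_eq, Module.finrank_pi]

lemma card_split (k : ℕ) : Fintype.card {p : Fin k × Fin k // ¬ p.2 < p.1}
    + Fintype.card {p : Fin k × Fin k // p.2 < p.1} = k * k := by
  classical
  have h := Fintype.card_congr (Equiv.sumCompl (fun p : Fin k × Fin k => p.2 < p.1))
  rw [Fintype.card_sum, Fintype.card_prod, Fintype.card_fin] at h
  omega

noncomputable def lowEquiv (m : ℕ) :
    {p : Fin (m+1) × Fin (m+1) // p.2 < p.1} ≃ {p : Fin m × Fin m // ¬ p.2 < p.1} where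
  toFun q := ⟨(⟨q.1.2.1, by have := Fin.lt_def.mp q.2; have := q.1.1.isLt; omega⟩,
               ⟨q.1.1.1 - 1, by have := Fin.lt_def.mp q.2; have := q.1.1.isLt; omega⟩),
    by have := Fin.lt_def.mp q.2; simp only [Fin.lt_def]; omega⟩
  invFun p := ⟨(⟨p.1.2.1 + 1, by have := p.1.2.isLt; omega⟩,
               ⟨p.1.1.1, by have := p.1.1.isLt; omega⟩),
    by have := Fin.le_def.mp (not_lt.mp p.2); simp only [Fin.lt_def]; omega⟩
  left_inv q := by
    have := Fin.lt_def.mp q.2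
    apply Subtype.ext
    apply Prod.ext <;> apply Fin.ext <;> simp <;> omega
  right_inv p := by
    apply Subtype.ext
    apply Prod.ext <;> apply Fin.ext <;> simp

lemma card_low (m : ℕ) : Fintype.card {p : Fin (m+1) × Fin (m+1) // p.2 < p.1}
    = Fintype.card {p : Fin m × Fin m // ¬ p.2 < p.1} :=
  Fintype.card_congr (lowEquiv m)

noncomputable def prodSubEquiv {R M N : Type*} [CommRing R] [AddCommGroup M] [AddCommGroup N]
    [Module R M] [Module R N] (p : Submodule R M) (q : Submodule R N) :
    (p.prod q) ≃ₗ[R] p × q where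
  toFun x := (⟨x.1.1, x.2.1⟩, ⟨x.1.2, x.2.2⟩)
  map_add' x y := rfl
  map_smul' c x := rfl
  invFun y := ⟨(y.1.1, y.2.1), ⟨y.1.2, y.2.2⟩⟩
  left_inv x := rfl
  right_inv y := rfl

lemma conjL_injective {k : ℕ} (u : GL (Fin k) ℂ) : Function.Injective (conjL u) := by
  have key : ∀ x, ((u⁻¹ : GL (Fin k) ℂ) : Matrix (Fin k) (Fin k) ℂ) * (conjL u x)
      * (u : Matrix (Fin k) (Fin k) ℂ) = x := by
    intro x
    simp only [conjL_apply, ← Matrix.mul_assoc]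
    rw [Units.inv_mul, one_mul, Matrix.mul_assoc, Units.inv_mul, mul_one]
  intro a b h
  rw [← key a, ← key b, h]

lemma finrank_conj_map {k : ℕ} (u : GL (Fin k) ℂ) :
    Module.finrank ℂ ((upperTriangularSubmodule k).map (conjL u))
      = Module.finrank ℂ (upperTriangularSubmodule k) :=
  (((upperTriangularSubmodule k).equivMapOfInjective (conjL u) (conjL_injective u)).symm).finrank_eq

lemma embL_injective (n : ℕ) : Function.Injective (embL n) := by
  intro a b h
  exact congrArg Prod.snd h

lemma disj (m : ℕ) :
    Disjoint (LinearMap.range (embL (m+1)))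
      (((upperTriangularSubmodule (m+1)).map (conjL (gu (m+1)))).prod
        ((upperTriangularSubmodule m).map (conjL (gu m)))) := by
  classical
  rw [Submodule.disjoint_def]
  intro x hx hx2
  obtain ⟨y, rfl⟩ := LinearMap.mem_range.mp hx
  rw [Submodule.mem_prod] at hx2
  obtain ⟨h1, h2⟩ := hx2
  have hy2 : ((embL (m+1)) y).2 ∈ Submodule.map (conjL (gu m)) (upperTriangularSubmodule m) := h2
  set y2 : Matrix (Fin m) (Fin m) ℂ := ((embL (m+1)) y).2 with hy2def
  have hyzero : y2 = 0 := by
    set Y : ℕ → ℕ → ℂ := fun a b =>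
      if h : a < m then if h' : b < m then y2 ⟨a, h⟩ ⟨b, h'⟩ else 0 else 0 with hY
    have Yout : ∀ a b, m ≤ a ∨ m ≤ b → Y a b = 0 := by
      intro a b hab
      rcases le_or_gt m a with ha | ha
      · simp only [hY, dif_neg (not_lt.mpr ha)]
      · rcases hab with hab | hab
        · omega
        · simp only [hY, dif_pos ha, dif_neg (not_lt.mpr hab)]
    obtain ⟨t, ht, heq⟩ := Submodule.mem_map.mp h1
    obtain ⟨s, hs, hseq⟩ := Submodule.mem_map.mp h2
    have hA : ∀ i j, i < m + 1 → j < m + 1 → i + j + 2 ≤ m + 1 →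
        Y i j + Complex.I * Y (m - i) j + Complex.I * Y i (m - j) - Y (m - i) (m - j) = 0 := by
      intro i j hi hj hij
      have hrevi : (⟨i, hi⟩ : Fin (m+1)).rev = ⟨m - i, by omega⟩ := by
        apply Fin.ext
        simp only [Fin.val_rev]
        omega
      have hrevj : (⟨j, hj⟩ : Fin (m+1)).rev = ⟨m - j, by omega⟩ := by
        apply Fin.ext
        simp only [Fin.val_rev]
        omega
      have key := congrFun (congrFun (sandwich_mem (k := m+1) t) ⟨i, hi⟩) ⟨j, hj⟩
      rw [sandwich_apply, Matrix.smul_apply, Jmat_mul_apply, smul_eq_mul, hrevi, hrevj] at key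
      have hz : t ⟨m - i, by omega⟩ ⟨j, hj⟩ = 0 := by
        apply mem_upperT.mp ht
        rw [Fin.mk_lt_mk]
        omega
      rw [hz, mul_zero] at key
      have hpt : ∀ (a b : Fin (m+1)), conjL (gu (m+1)) t a b = Y a b := by
        intro a b
        rw [heq]
        rfl
      rw [hpt, hpt, hpt, hpt] at key
      exact key
    have hB : ∀ a b, a < m → b < m → a + b + 2 ≤ m →
        Y a b + Complex.I * Y (m - 1 - a) b + Complex.I * Y a (m - 1 - b)
          - Y (m - 1 - a) (m - 1 - b) = 0 := by
      intro a b ha hb hab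
      have hreva : (⟨a, ha⟩ : Fin m).rev = ⟨m - 1 - a, by omega⟩ := by
        apply Fin.ext
        simp only [Fin.val_rev]
        omega
      have hrevb : (⟨b, hb⟩ : Fin m).rev = ⟨m - 1 - b, by omega⟩ := by
        apply Fin.ext
        simp only [Fin.val_rev]
        omega
      have key := congrFun (congrFun (sandwich_mem (k := m) s) ⟨a, ha⟩) ⟨b, hb⟩
      rw [sandwich_apply, Matrix.smul_apply, Jmat_mul_apply, smul_eq_mul, hreva, hrevb] at key
      have hz : s ⟨m - 1 - a, by omega⟩ ⟨b, hb⟩ = 0 := by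
        apply mem_upperT.mp hs
        rw [Fin.mk_lt_mk]
        omega
      rw [hz, mul_zero] at key
      have hpt : ∀ (c d : Fin m), conjL (gu m) s c d = Y c d := by
        intro c d
        have h := congrFun (congrFun hseq c) d
        refine Eq.trans h ?_
        simp only [hY]
        rw [dif_pos c.isLt, dif_pos d.isLt, Fin.eta, Fin.eta]
      rw [hpt, hpt, hpt, hpt] at key
      exact key
    have hall := core m Y Yout hA hB
    ext a b
    have : Y a b = 0 := hall a b
    simpa only [hY, dif_pos a.isLt, dif_pos b.isLt, Fin.eta, Matrix.zero_apply] using this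
  have hyz : y = 0 := hyzero
  rw [hyz, map_zero]

theorem master (m : ℕ) :
    ∃ (u : GL (Fin (m+1)) ℂ) (w : GL (Fin m) ℂ),
      (∀ x ∈ (upperTriangularSubmodule (m+1)).map (conjL u),
        -xᵀ ∈ (upperTriangularSubmodule (m+1)).map (conjL u)) ∧
      (∀ x ∈ (upperTriangularSubmodule m).map (conjL w),
        -xᵀ ∈ (upperTriangularSubmodule m).map (conjL w)) ∧
      IsCompl (LinearMap.range (embL (m+1)))
        (((upperTriangularSubmodule (m+1)).map (conjL u)).prod
          ((upperTriangularSubmodule m).map (conjL w))) := by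
  refine ⟨gu (m+1), gu m, theta_stable (m+1), theta_stable m, ?_, ?_⟩
  · exact disj m
  · rw [codisjoint_iff]
    apply Submodule.eq_top_of_disjoint _ _ ?_ (disj m)
    have e1 : Module.finrank ℂ (LinearMap.range (embL (m+1))) = m * m := by
      rw [LinearMap.finrank_range_of_inj (embL_injective (m+1))]
      rw [Module.finrank_matrix]
      simp [Fintype.card_fin]
    have e2 : Module.finrank ℂ
        ((((upperTriangularSubmodule (m+1)).map (conjL (gu (m+1)))).prod
          ((upperTriangularSubmodule m).map (conjL (gu m)))) :
            Submodule ℂ (Matrix (Fin (m+1)) (Fin (m+1)) ℂ × Matrix (Fin m) (Fin m) ℂ))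
        = Fintype.card {p : Fin (m+1) × Fin (m+1) // ¬ p.2 < p.1}
          + Fintype.card {p : Fin m × Fin m // ¬ p.2 < p.1} := by
      rw [(prodSubEquiv _ _).finrank_eq, Module.finrank_prod,
        finrank_conj_map (gu (m+1)), finrank_conj_map (gu m),
        finrank_upperT (m+1), finrank_upperT m]
    have e3 : Module.finrank ℂ (Matrix (Fin (m+1)) (Fin (m+1)) ℂ × Matrix (Fin m) (Fin m) ℂ)
        = (m+1) * (m+1) + m * m := by
      rw [Module.finrank_prod, Module.finrank_matrix, Module.finrank_matrix]
      simp [Fintype.card_fin]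
    have e4 := card_split (m+1)
    have e5 := card_split m
    have e6 := card_low m
    show Module.finrank ℂ (Matrix (Fin (m+1)) (Fin (m+1)) ℂ × Matrix (Fin m) (Fin m) ℂ) ≤
      Module.finrank ℂ (LinearMap.range (embL (m+1)))
      + Module.finrank ℂ
        ((((upperTriangularSubmodule (m+1)).map (conjL (gu (m+1)))).prod
          ((upperTriangularSubmodule m).map (conjL (gu m)))) :
            Submodule ℂ (Matrix (Fin (m+1)) (Fin (m+1)) ℂ × Matrix (Fin m) (Fin m) ℂ))
    rw [e1, e2, e3]
    omega

end Stmt4Aux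

/-- For `n ≥ 2`, letting `g = gl_n(ℂ) × gl_{n-1}(ℂ)` and `h ⊂ g` the image of
`gl_{n-1}(ℂ)` under `x ↦ (diag(x,0), x)`, there are Borel subalgebras
`b_n ⊂ gl_n(ℂ)` and `b_{n-1} ⊂ gl_{n-1}(ℂ)` (conjugates of the upper
triangular matrices, namely the theta-stable ones built from the fundamental
Cartan subalgebras: they are stable under `θ(x) = -xᵀ`) such that
`g = h ⊕ b` with `b = b_n × b_{n-1}` as vector spaces. -/
theorem stmt_4 (n : ℕ) (hn : 2 ≤ n) :
    ∃ (u : GL (Fin n) ℂ) (w : GL (Fin (n - 1)) ℂ),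
      (∀ x ∈ (upperTriangularSubmodule n).map (conjL u),
        -xᵀ ∈ (upperTriangularSubmodule n).map (conjL u)) ∧
      (∀ x ∈ (upperTriangularSubmodule (n - 1)).map (conjL w),
        -xᵀ ∈ (upperTriangularSubmodule (n - 1)).map (conjL w)) ∧
      IsCompl (LinearMap.range (embL n))
        (((upperTriangularSubmodule n).map (conjL u)).prod
          ((upperTriangularSubmodule (n - 1)).map (conjL w))) := by
  obtain ⟨m, rfl⟩ : ∃ m, n = m + 1 := ⟨n - 1, by omega⟩
  exact Stmt4Aux.master m
end

section
/- Let G be a unimodular locally compact group, H ≤ G a closed unimodular subgroup, and Ξ : G → ℝ_{>0} a continuous function whose restriction to H is integrable with respect to a Haar measure dh on H. Let V be a complex topological vector space with a continuous Hermitian form ⟨·,·⟩ and a G-action, and suppose there is a continuous seminorm |·| on V with |⟨g·u, v⟩| ≤ Ξ(g)·|u|·|v| for all u,v ∈ V and g ∈ G. Then for any continuous character χ : H → {±1}, the integral (u,v) ↦ ∫_H ⟨h·u, v⟩ χ(h) dh converges absolutely for all u,v ∈ V and defines a Hermitian form on V. -/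
open MeasureTheory


/-- A Haar measure that is also right invariant (unimodularity), on a locally
compact group carrying a positive continuous integrable function, is invariant
under inversion. -/
lemma aux_isInvInvariant {K : Type*} [Group K] [TopologicalSpace K] [IsTopologicalGroup K]
    [LocallyCompactSpace K] [MeasurableSpace K] [BorelSpace K]
    (μ : Measure K) [μ.IsHaarMeasure] [μ.IsMulRightInvariant]
    (Xi : K → ℝ) (hXicont : Continuous Xi) (hXipos : ∀ x, 0 < Xi x)
    (hXiint : Integrable Xi μ) : μ.IsInvInvariant := by
  -- μ.inv is a Haar measure
  haveI : IsFiniteMeasureOnCompacts μ.inv := by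
    constructor
    intro K hK
    rw [Measure.inv_apply]
    exact hK.inv.measure_lt_top
  haveI : μ.inv.IsOpenPosMeasure := by
    constructor
    intro U hU hUne
    rw [Measure.inv_apply]
    exact hU.inv.measure_ne_zero μ hUne.inv
  haveI : μ.inv.IsHaarMeasure := ⟨⟩
  -- the Haar scalar factor between μ.inv and μ is 1
  obtain ⟨⟨g, g_cont⟩, g_comp, g_nonneg, g_one⟩ :
      ∃ g : C(K, ℝ), HasCompactSupport g ∧ 0 ≤ g ∧ g 1 ≠ 0 := exists_continuous_nonneg_pos 1
  set f : K → ℝ := fun x => g x + g x⁻¹ with hf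
  have f_cont : Continuous f := g_cont.add (g_cont.comp continuous_inv)
  have f_comp : HasCompactSupport f :=
    g_comp.add (g_comp.comp_homeomorph (Homeomorph.inv K))
  have g_int_pos : 0 < ∫ x, g x ∂μ :=
    g_cont.integral_pos_of_hasCompactSupport_nonneg_nonzero g_comp g_nonneg g_one
  have f_int_pos : 0 < ∫ x, f x ∂μ := by
    have h1 : Integrable (fun x => g x) μ := g_cont.integrable_of_hasCompactSupport g_comp
    have h2 : Integrable (fun x => g x⁻¹) μ :=
      (g_cont.comp continuous_inv).integrable_of_hasCompactSupport
        (g_comp.comp_homeomorph (Homeomorph.inv K))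
    have : ∫ x, f x ∂μ = (∫ x, g x ∂μ) + ∫ x, g x⁻¹ ∂μ := integral_add h1 h2
    rw [this]
    have : 0 ≤ ∫ x, g x⁻¹ ∂μ := integral_nonneg fun x => g_nonneg _
    linarith
  have f_inv : ∫ x, f x ∂μ.inv = ∫ x, f x ∂μ := by
    rw [Measure.inv_def, integral_map measurable_inv.aemeasurable f_cont.aestronglyMeasurable]
    simp only [hf, inv_inv]
    exact integral_congr_ae (Filter.Eventually.of_forall fun x => by ring)
  have hc : (μ.inv.haarScalarFactor μ : ℝ) = 1 := by
    rw [Measure.haarScalarFactor_eq_integral_div μ.inv μ f_cont f_comp f_int_pos.ne',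
      f_inv, div_self f_int_pos.ne']
  have hc1 : μ.inv.haarScalarFactor μ = 1 := by
    exact_mod_cast hc
  -- μ.inv and μ agree on open sets
  have hopen : ∀ s : Set K, IsOpen s → μ.inv s = μ s := by
    intro s hs
    rw [Measure.measure_isHaarMeasure_eq_smul_of_isOpen μ.inv μ hs, hc1, one_smul]
  -- extend to all Borel sets using σ-finiteness coming from Ξ
  have hμeq : μ.inv = μ := by
    refine MeasureTheory.Measure.ext_of_generateFrom_of_iUnion {s : Set K | IsOpen s}
      (fun n => {x | 1 / ((n : ℝ) + 1) < Xi x}) ?_ isPiSystem_isOpen ?_ ?_ ?_ ?_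
    · exact BorelSpace.measurable_eq (α := K)
    · ext x
      simp only [Set.mem_iUnion, Set.mem_univ, iff_true, Set.mem_setOf_eq]
      exact exists_nat_one_div_lt (hXipos x)
    · intro n
      exact isOpen_lt continuous_const hXicont
    · intro n
      rw [hopen _ (isOpen_lt continuous_const hXicont)]
      have hsub : {x | 1 / ((n : ℝ) + 1) < Xi x} ⊆ {x | 1 / ((n : ℝ) + 1) ≤ Xi x} :=
        fun x hx => le_of_lt (Set.mem_setOf_eq ▸ hx)
      refine ne_of_lt (lt_of_le_of_lt (measure_mono hsub) ?_)
      exact hXiint.measure_ge_lt_top (by positivity)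
    · intro s hs
      exact hopen s hs
  exact ⟨hμeq⟩


/-- Let `G` be a unimodular locally compact group (with a Haar measure `ν`
that is both left and right invariant), `H ≤ G` a closed unimodular subgroup
with Haar measure `μ` (left and right invariant), and `Ξ : G → ℝ_{>0}`
continuous with integrable restriction to `H`.  Let `V` be a complex
topological vector space with a continuous `G`-action, a continuous Hermitian
form `B₀` invariant under `H`, and a continuous seminorm `p` with
`‖B₀(g·u, v)‖ ≤ Ξ(g)·p(u)·p(v)`.  Then for any continuous character
`χ : H → {±1}`, the integral `(u,v) ↦ ∫_H B₀(h·u, v) χ(h) dh` converges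
absolutely for all `u, v` and defines a Hermitian form on `V`. -/
theorem stmt_18 {G : Type*} [Group G] [TopologicalSpace G] [IsTopologicalGroup G]
    [LocallyCompactSpace G] [MeasurableSpace G] [BorelSpace G]
    (ν : Measure G) [ν.IsHaarMeasure] [ν.IsMulRightInvariant]
    (H : Subgroup G) (hH : IsClosed (H : Set G))
    [MeasurableSpace ↥H] [BorelSpace ↥H]
    (μ : Measure ↥H) [μ.IsHaarMeasure] [μ.IsMulRightInvariant]
    {V : Type*} [AddCommGroup V] [Module ℂ V] [TopologicalSpace V]
    [MulAction G V] [ContinuousSMul G V]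
    (B₀ : V → V → ℂ)
    (hherm : ∀ u v : V, B₀ v u = starRingEnd ℂ (B₀ u v))
    (hBcont : Continuous fun q : V × V => B₀ q.1 q.2)
    (hinv : ∀ (h : ↥H) (u v : V), B₀ ((h : G) • u) ((h : G) • v) = B₀ u v)
    (p : Seminorm ℂ V) (hpcont : Continuous p)
    (Xi : G → ℝ) (hXicont : Continuous Xi) (hXipos : ∀ g : G, 0 < Xi g)
    (hXiint : Integrable (fun h : ↥H => Xi (h : G)) μ)
    (hbound : ∀ (g : G) (u v : V), ‖B₀ (g • u) v‖ ≤ Xi g * p u * p v)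
    (χ : ↥H →* ℂ) (hχ : ∀ h : ↥H, χ h = 1 ∨ χ h = -1) (hχcont : Continuous χ) :
    (∀ u v : V, Integrable (fun h : ↥H => B₀ ((h : G) • u) v * χ h) μ) ∧
    (∀ u v : V, (∫ h : ↥H, B₀ ((h : G) • v) u * χ h ∂μ) =
      starRingEnd ℂ (∫ h : ↥H, B₀ ((h : G) • u) v * χ h ∂μ)) := by
  haveI hLC : LocallyCompactSpace ↥H := hH.locallyCompactSpace
  haveI : μ.IsInvInvariant :=
    aux_isInvInvariant μ (fun h : ↥H => Xi (h : G))
      (hXicont.comp continuous_subtype_val) (fun h => hXipos _) hXiint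
  -- norm of the character
  have hχnorm : ∀ h : ↥H, ‖χ h‖ = 1 := by
    intro h
    rcases hχ h with e | e <;> rw [e] <;> simp
  -- continuity of the integrand
  have hcont : ∀ u v : V, Continuous fun h : ↥H => B₀ ((h : G) • u) v * χ h := by
    intro u v
    apply Continuous.mul _ hχcont
    exact hBcont.comp (((continuous_subtype_val.smul continuous_const)).prodMk
      continuous_const)
  -- integrability
  have hint : ∀ u v : V, Integrable (fun h : ↥H => B₀ ((h : G) • u) v * χ h) μ := by
    intro u v
    refine Integrable.mono' ((hXiint.mul_const (p u)).mul_const (p v))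
      ((hcont u v).aestronglyMeasurable) ?_
    refine Filter.Eventually.of_forall fun h => ?_
    rw [norm_mul, hχnorm h, mul_one]
    exact hbound _ u v
  refine ⟨hint, fun u v => ?_⟩
  -- χ is symmetric under inversion and real
  have hχconj : ∀ h : ↥H, (starRingEnd ℂ) (χ h) = χ h := by
    intro h
    rcases hχ h with e | e <;> rw [e] <;> simp
  have hχinv : ∀ h : ↥H, χ h⁻¹ = χ h := by
    intro h
    have h0 : χ h ≠ 0 := by rcases hχ h with e | e <;> rw [e] <;> norm_num
    have h1 : χ h * χ h⁻¹ = 1 := by rw [← map_mul, mul_inv_cancel, map_one]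
    have h2 : χ h * χ h = 1 := by rcases hχ h with e | e <;> rw [e] <;> ring
    exact mul_left_cancel₀ h0 (h1.trans h2.symm)
  rw [← integral_conj]
  symm
  have hcongr : ∀ h : ↥H, (starRingEnd ℂ) (B₀ ((h : G) • u) v * χ h) =
      (fun h : ↥H => B₀ ((h : G) • v) u * χ h) h⁻¹ := by
    intro h
    have e1 : (starRingEnd ℂ) (B₀ ((h : G) • u) v) = B₀ v ((h : G) • u) :=
      (hherm ((h : G) • u) v).symm
    have e2 : B₀ v ((h : G) • u) = B₀ (((h⁻¹ : ↥H) : G) • v) u := by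
      have := hinv h (((h⁻¹ : ↥H) : G) • v) u
      rw [Subgroup.coe_inv] at this ⊢
      rwa [smul_inv_smul] at this
    simp only [map_mul, e1, e2, hχconj h, hχinv h]
  calc ∫ h : ↥H, (starRingEnd ℂ) (B₀ ((h : G) • u) v * χ h) ∂μ
      = ∫ h : ↥H, (fun h : ↥H => B₀ ((h : G) • v) u * χ h) h⁻¹ ∂μ := by
        exact integral_congr_ae (Filter.Eventually.of_forall hcongr)
    _ = ∫ h : ↥H, B₀ ((h : G) • v) u * χ h ∂μ :=
        integral_inv_eq_self (fun h : ↥H => B₀ ((h : G) • v) u * χ h) μ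
end
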